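/- Let m be a positive odd integer and t > 0. Then ψ^(m)(t) · ψ^(m+2)(t) − [ψ^(m+1)(t)]² ≥ 0. -/

import Mathlib

open Real Filter Topology Set

/-- The digamma (psi) function: logarithmic derivative of the Gamma function. -/
noncomputable def psi (t : ℝ) : ℝ := deriv Real.Gamma t / Real.Gamma t

namespace PolygammaAux

/-- the series `∑ 1/(x+n)^j`. -/
noncomputable def T (j : ℕ) (x : ℝ) : ℝ := ∑' n : ℕ, 1 / (x + n) ^ j

lemma base_summable : Summable (fun n : ℕ => 1 / ((n : ℝ) + 1) ^ 2) := by
  have := (summable_nat_add_iff (f := fun n : ℕ => 1 / (n : ℝ) ^ 2) 1).mpr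
    (summable_one_div_nat_pow.mpr one_lt_two)
  simpa using this

lemma summable_T {c : ℝ} (hc : 0 < c) {j : ℕ} (hj : 2 ≤ j) :
    Summable (fun n : ℕ => 1 / (c + n) ^ j) := by
  rw [← summable_nat_add_iff 1]
  apply base_summable.of_nonneg_of_le (fun n => by positivity)
  intro n
  apply one_div_le_one_div_of_le (by positivity)
  push_cast
  calc ((n : ℝ) + 1) ^ 2 ≤ ((n : ℝ) + 1) ^ j := by
        apply pow_le_pow_right₀ (by linarith [Nat.cast_nonneg (α := ℝ) n]) hj
    _ ≤ (c + (n + 1)) ^ j := by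
        apply pow_le_pow_left₀ (by positivity)
        linarith [Nat.cast_nonneg (α := ℝ) n]

lemma T_nonneg (j : ℕ) {x : ℝ} (hx : 0 < x) : 0 ≤ T j x :=
  tsum_nonneg fun n => by
    have : (0:ℝ) < x + n := by positivity
    positivity

end PolygammaAux

namespace PolygammaAux

lemma hasDerivAt_term (k : ℕ) (n : ℕ) {y : ℝ} (hy : 0 < y) :
    HasDerivAt (fun z : ℝ => 1 / (z + n) ^ (k + 1)) (-((k : ℝ) + 1) / (y + n) ^ (k + 2)) y := by
  have hyn : (0:ℝ) < y + n := by positivity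
  have h1 : HasDerivAt (fun z : ℝ => (z + n) ^ (k + 1)) (((k:ℝ) + 1) * (y + n) ^ k) y := by
    have := ((hasDerivAt_id y).add_const (n:ℝ)).fun_pow (k + 1)
    simpa using this
  have h2 := h1.inv (by positivity)
  simp only [one_div]
  refine h2.congr_deriv ?_
  field_simp
  ring

lemma hasDerivAt_T {k : ℕ} (hk : 1 ≤ k) {x : ℝ} (hx : 0 < x) :
    HasDerivAt (T (k + 1)) (-((k : ℝ) + 1) * T (k + 2) x) x := by
  have hc : 0 < x / 2 := by linarith
  have hu : Summable (fun n : ℕ => ((k:ℝ) + 1) / (x / 2 + n) ^ (k + 2)) := by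
    simpa [div_eq_mul_inv, one_div, mul_comm] using
      (summable_T hc (by omega : 2 ≤ k + 2)).mul_left ((k:ℝ) + 1)
  have key := hasDerivAt_tsum_of_isPreconnected hu isOpen_Ioi (convex_Ioi (x/2)).isPreconnected
    (g := fun (n : ℕ) (z : ℝ) => 1 / (z + n) ^ (k + 1)) (g' := fun (n : ℕ) (z : ℝ) => -((k:ℝ) + 1) / (z + n) ^ (k + 2))
    (fun n y hy => hasDerivAt_term k n (lt_trans hc hy))
    (fun n y hy => by
      have hy0 : 0 < y := lt_trans hc hy
      have h1 : (0:ℝ) < y + n := by positivity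
      have h2 : (0:ℝ) < x / 2 + n := by positivity
      rw [Real.norm_eq_abs, abs_div, abs_neg, abs_of_nonneg (by positivity : (0:ℝ) ≤ (k:ℝ)+1),
        abs_of_nonneg (by positivity : (0:ℝ) ≤ (y+n)^(k+2))]
      apply div_le_div_of_nonneg_left (by positivity) (by positivity)
      apply pow_le_pow_left₀ (le_of_lt h2)
      linarith [le_of_lt (mem_Ioi.mp hy)])
    (mem_Ioi.mpr (by linarith : x / 2 < x))
    (summable_T hx (by omega : 2 ≤ k + 1))
    (mem_Ioi.mpr (by linarith : x / 2 < x))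
  have : (∑' n : ℕ, -((k:ℝ) + 1) / (x + n) ^ (k + 2)) = -((k : ℝ) + 1) * T (k + 2) x := by
    rw [T, ← tsum_mul_left]
    congr 1
    ext n
    rw [mul_one_div]
  rw [this] at key
  exact key

end PolygammaAux

namespace PolygammaAux

noncomputable def S (x : ℝ) : ℝ :=
  -Real.eulerMascheroniConstant + ∑' n : ℕ, (1 / ((n : ℝ) + 1) - 1 / (x + n))

lemma summable_S_terms {x : ℝ} (hx : 0 < x) :
    Summable (fun n : ℕ => 1 / ((n : ℝ) + 1) - 1 / (x + n)) := by
  apply Summable.of_abs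
  rw [← summable_nat_add_iff 1]
  apply (base_summable.mul_left |x - 1|).of_nonneg_of_le (fun n => abs_nonneg _)
  intro n
  push_cast
  have h1 : (0:ℝ) < (n:ℝ) + 1 + 1 := by positivity
  have h2 : (0:ℝ) < x + ((n:ℝ) + 1) := by positivity
  have key : 1 / ((n:ℝ) + 1 + 1) - 1 / (x + ((n:ℝ) + 1)) =
      (x - 1) / (((n:ℝ) + 1 + 1) * (x + ((n:ℝ) + 1))) := by
    field_simp
    ring
  have h3 : |((n:ℝ) + 1 + 1) * (x + ((n:ℝ) + 1))| = ((n:ℝ) + 1 + 1) * (x + ((n:ℝ) + 1)) :=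
    abs_of_pos (by positivity)
  rw [key, abs_div, h3, mul_one_div]
  apply div_le_div_of_nonneg_left (abs_nonneg _) (by positivity)
  nlinarith [Nat.cast_nonneg (α := ℝ) n]

lemma tendsto_one_div_add (x : ℝ) : Tendsto (fun N : ℕ => 1 / (x + N)) atTop (𝓝 0) := by
  simp only [one_div]
  exact (tendsto_atTop_add_const_left atTop x tendsto_natCast_atTop_atTop).inv_tendsto_atTop

lemma hasSum_telescope {x : ℝ} (hx : 0 < x) :
    HasSum (fun n : ℕ => 1 / (x + n) - 1 / (x + (n + 1))) (1 / x) := by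
  have hsumm : Summable (fun n : ℕ => 1 / (x + n) - 1 / (x + (n + 1))) := by
    apply (summable_T hx (le_refl 2)).of_nonneg_of_le
    · intro n
      have h1 : (0:ℝ) < x + n := by positivity
      have h2 : (0:ℝ) < x + ((n:ℝ) + 1) := by positivity
      have : 1 / (x + ((n:ℝ) + 1)) ≤ 1 / (x + n) := by
        apply one_div_le_one_div_of_le h1; linarith
      linarith
    · intro n
      have h1 : (0:ℝ) < x + n := by positivity
      have h2 : (0:ℝ) < x + ((n:ℝ) + 1) := by positivity
      have key : 1 / (x + (n:ℝ)) - 1 / (x + ((n:ℝ) + 1)) =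
          1 / ((x + (n:ℝ)) * (x + ((n:ℝ) + 1))) := by field_simp; ring
      rw [key, pow_two]
      apply div_le_div_of_nonneg_left one_pos.le (by positivity)
      nlinarith
  rw [hsumm.hasSum_iff_tendsto_nat]
  have heq : ∀ N : ℕ, ∑ i ∈ Finset.range N, (1 / (x + i) - 1 / (x + (i + 1)))
      = 1 / (x + 0) - 1 / (x + N) := by
    intro N
    have := Finset.sum_range_sub' (f := fun i : ℕ => 1 / (x + i)) N
    push_cast at this ⊢
    convert this using 2
  simp only [heq]
  have := (tendsto_const_nhds (x := 1 / (x + (0:ℕ)))).sub (tendsto_one_div_add x)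
  simpa using this

lemma S_rec {x : ℝ} (hx : 0 < x) : S (x + 1) = S x + 1 / x := by
  have h1 := summable_S_terms (by linarith : (0:ℝ) < x + 1)
  have h2 := summable_S_terms hx
  have key : S (x + 1) - S x = ∑' n : ℕ, (1 / (x + n) - 1 / (x + (n + 1))) := by
    rw [S, S]
    rw [add_sub_add_left_eq_sub, ← Summable.tsum_sub h1 h2]
    congr 1
    ext n
    push_cast
    ring_nf
  rw [(hasSum_telescope hx).tsum_eq] at key
  linarith

lemma S_one : S 1 = -Real.eulerMascheroniConstant := by
  rw [S]
  have h0 : ∀ n : ℕ, 1 / ((n : ℝ) + 1) - 1 / (1 + n) = (0:ℝ) := fun n => by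
    rw [add_comm (1:ℝ) (n:ℝ)]; ring
  rw [tsum_congr h0, tsum_zero, add_zero]

lemma S_mono {x y : ℝ} (hx : 0 < x) (hxy : x ≤ y) : S x ≤ S y := by
  rw [S, S]
  have hy : 0 < y := lt_of_lt_of_le hx hxy
  apply add_le_add_right
  apply Summable.tsum_le_tsum _ (summable_S_terms hx) (summable_S_terms hy)
  intro n
  have h1 : (0:ℝ) < x + n := by positivity
  have : 1 / (y + n) ≤ 1 / (x + n) := by
    apply one_div_le_one_div_of_le h1; linarith
  linarith

end PolygammaAux

namespace PolygammaAux

lemma hasDerivAt_S {x : ℝ} (hx : 0 < x) : HasDerivAt S (T 2 x) x := by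
  have hc : 0 < x / 2 := by linarith
  have hu : Summable (fun n : ℕ => 1 / (x / 2 + n) ^ 2) := summable_T hc le_rfl
  have key := hasDerivAt_tsum_of_isPreconnected hu isOpen_Ioi (convex_Ioi (x/2)).isPreconnected
    (g := fun (n : ℕ) (z : ℝ) => 1 / ((n : ℝ) + 1) - 1 / (z + n))
    (g' := fun (n : ℕ) (z : ℝ) => 1 / (z + n) ^ 2)
    (fun n y hy => by
      have hy0 : 0 < y := lt_trans hc hy
      have h1 : (0:ℝ) < y + n := by positivity
      have h0 : HasDerivAt (fun z : ℝ => (z + (n:ℝ))⁻¹) (-1 / (y + n) ^ 2) y := by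
        simpa using ((hasDerivAt_id y).add_const (n:ℝ)).fun_inv h1.ne'
      have h2 := (hasDerivAt_const y (1 / ((n:ℝ) + 1))).sub h0
      simp only [one_div]
      convert h2 using 1
      · ext z; simp only [Pi.sub_apply]; ring
      · ring)
    (fun n y hy => by
      have hy0 : 0 < y := lt_trans hc hy
      have h1 : (0:ℝ) < y + n := by positivity
      have h2 : (0:ℝ) < x / 2 + n := by positivity
      rw [Real.norm_eq_abs, abs_of_pos (by positivity)]
      apply div_le_div_of_nonneg_left one_pos.le (by positivity)
      apply pow_le_pow_left₀ (le_of_lt h2)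
      linarith [le_of_lt (mem_Ioi.mp hy)])
    (mem_Ioi.mpr (by linarith : x / 2 < x))
    (summable_S_terms hx)
    (mem_Ioi.mpr (by linarith : x / 2 < x))
  have : S = fun z => -Real.eulerMascheroniConstant +
      ∑' n : ℕ, (1 / ((n : ℝ) + 1) - 1 / (z + n)) := rfl
  rw [this]
  exact key.const_add _

/-! ### The function `log ∘ Gamma` -/

lemma diffGamma {x : ℝ} (hx : 0 < x) : DifferentiableAt ℝ Real.Gamma x :=
  Real.differentiableAt_Gamma fun m => by
    have : (0:ℝ) ≤ m := Nat.cast_nonneg m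
    intro h; rw [h] at hx; linarith

lemma diffF {x : ℝ} (hx : 0 < x) : DifferentiableAt ℝ (Real.log ∘ Real.Gamma) x :=
  (diffGamma hx).log (Real.Gamma_pos_of_pos hx).ne'

lemma derivF_eq_psi {x : ℝ} (hx : 0 < x) : deriv (Real.log ∘ Real.Gamma) x = psi x := by
  rw [Function.comp_def, deriv.log (diffGamma hx) (Real.Gamma_pos_of_pos hx).ne', psi]

lemma derivF_rec {x : ℝ} (hx : 0 < x) :
    deriv (Real.log ∘ Real.Gamma) (x + 1) = deriv (Real.log ∘ Real.Gamma) x + 1 / x := by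
  have h_rec : ∀ᶠ y in 𝓝 x, (Real.log ∘ Real.Gamma) (y + 1) =
      (Real.log ∘ Real.Gamma) y + Real.log y := by
    filter_upwards [eventually_gt_nhds hx] with y hy
    simp only [Function.comp_apply, Real.Gamma_add_one hy.ne',
      Real.log_mul hy.ne' (Real.Gamma_pos_of_pos hy).ne']
    ring
  rw [← deriv_comp_add_const, one_div, ← Real.deriv_log,
    ← deriv_add (diffF (by positivity)) (Real.differentiableAt_log hx.ne')]
  exact EventuallyEq.deriv_eq h_rec

lemma derivF_one : deriv (Real.log ∘ Real.Gamma) 1 = -Real.eulerMascheroniConstant := by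
  rw [derivF_eq_psi one_pos, psi, Real.Gamma_one, div_one,
    Real.hasDerivAt_Gamma_one.deriv]

lemma derivF_mono {x y : ℝ} (hx : 0 < x) (hxy : x ≤ y) :
    deriv (Real.log ∘ Real.Gamma) x ≤ deriv (Real.log ∘ Real.Gamma) y := by
  rcases eq_or_lt_of_le hxy with rfl | hlt
  · exact le_rfl
  have hy : 0 < y := lt_trans hx hlt
  have h1 := Real.convexOn_log_Gamma.deriv_le_slope (mem_Ioi.mpr hx) (mem_Ioi.mpr hy) hlt
    (diffF hx)
  have h2 := Real.convexOn_log_Gamma.slope_le_deriv (mem_Ioi.mpr hx) (mem_Ioi.mpr hy) hlt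
    (diffF hy)
  linarith

end PolygammaAux

namespace PolygammaAux

lemma eq_at_nat : ∀ n : ℕ, 1 ≤ n → deriv (Real.log ∘ Real.Gamma) n = S n := by
  intro n hn
  induction n with
  | zero => omega
  | succ k ih =>
    rcases Nat.lt_or_ge 1 (k + 1) with h | h
    · have hk : 1 ≤ k := by omega
      have hkpos : (0:ℝ) < k := by exact_mod_cast hk
      push_cast
      rw [derivF_rec hkpos, S_rec hkpos, ih hk]
    · have : k = 0 := by omega
      subst this
      simpa using derivF_one.trans S_one.symm

lemma psi_eq_S {x : ℝ} (hx : 0 < x) : psi x = S x := by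
  rw [← derivF_eq_psi hx]
  have hshift : ∀ k : ℕ, deriv (Real.log ∘ Real.Gamma) (x + k) - S (x + k)
      = deriv (Real.log ∘ Real.Gamma) x - S x := by
    intro k
    induction k with
    | zero => simp
    | succ j ih =>
      have hxj : 0 < x + j := by positivity
      have hcast : x + ((j : ℝ) + 1) = (x + j) + 1 := by ring
      push_cast
      rw [hcast, derivF_rec hxj, S_rec hxj]
      push_cast at ih
      linarith
  have hbound : ∀ k : ℕ, 1 ≤ k →
      |deriv (Real.log ∘ Real.Gamma) x - S x| ≤ 1 / k := by
    intro k hk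
    have hn1 : 1 ≤ ⌊x⌋₊ + k := by omega
    set n : ℕ := ⌊x⌋₊ + k with hn
    have hnx : (n : ℝ) ≤ x + k := by
      rw [hn]; push_cast; linarith [Nat.floor_le hx.le]
    have hxn : x + k ≤ (n : ℝ) + 1 := by
      rw [hn]; push_cast; linarith [Nat.lt_floor_add_one x]
    have hnpos : (0:ℝ) < n := by exact_mod_cast hn1
    have e1 : deriv (Real.log ∘ Real.Gamma) n = S n := eq_at_nat n hn1
    have m1 : deriv (Real.log ∘ Real.Gamma) (n : ℝ) ≤
        deriv (Real.log ∘ Real.Gamma) (x + k) := derivF_mono hnpos hnx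
    have m2 : deriv (Real.log ∘ Real.Gamma) (x + k) ≤
        deriv (Real.log ∘ Real.Gamma) ((n : ℝ) + 1) := derivF_mono (by positivity) hxn
    have m3 : S (n : ℝ) ≤ S (x + k) := S_mono hnpos hnx
    have m4 : S (x + k) ≤ S ((n : ℝ) + 1) := S_mono (by positivity) hxn
    have gapS : S ((n : ℝ) + 1) = S n + 1 / n := S_rec hnpos
    have gapF : deriv (Real.log ∘ Real.Gamma) ((n : ℝ) + 1) =
        deriv (Real.log ∘ Real.Gamma) (n : ℝ) + 1 / n := derivF_rec hnpos
    have habs : |deriv (Real.log ∘ Real.Gamma) (x + k) - S (x + k)| ≤ 1 / n :=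
      abs_le.mpr ⟨by linarith, by linarith⟩
    rw [← hshift k]
    refine habs.trans ?_
    apply one_div_le_one_div_of_le (by exact_mod_cast hk)
    exact_mod_cast Nat.le_add_left k ⌊x⌋₊
  have hzero : |deriv (Real.log ∘ Real.Gamma) x - S x| ≤ 0 := by
    apply ge_of_tendsto tendsto_one_div_atTop_nhds_zero_nat
    filter_upwards [eventually_ge_atTop 1] with k hk using hbound k hk
  have := abs_nonneg (deriv (Real.log ∘ Real.Gamma) x - S x)
  have h0 : |deriv (Real.log ∘ Real.Gamma) x - S x| = 0 := le_antisymm hzero this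
  have := abs_eq_zero.mp h0
  linarith

end PolygammaAux

namespace PolygammaAux

lemma iteratedDeriv_psi : ∀ k : ℕ, 1 ≤ k → ∀ x : ℝ, 0 < x →
    iteratedDeriv k psi x = (-1 : ℝ) ^ (k + 1) * (Nat.factorial k : ℝ) * T (k + 1) x := by
  intro k
  induction k with
  | zero => omega
  | succ j ih =>
    intro _ x hx
    rcases Nat.eq_zero_or_pos j with rfl | hj
    · rw [iteratedDeriv_one]
      have hev : psi =ᶠ[𝓝 x] S :=
        eventually_of_mem (isOpen_Ioi.mem_nhds hx) (fun y hy => psi_eq_S hy)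
      rw [hev.deriv_eq, (hasDerivAt_S hx).deriv]
      norm_num
    · rw [iteratedDeriv_succ]
      have hev : iteratedDeriv j psi =ᶠ[𝓝 x]
          (fun y => (-1 : ℝ) ^ (j + 1) * (Nat.factorial j : ℝ) * T (j + 1) y) :=
        eventually_of_mem (isOpen_Ioi.mem_nhds hx) (fun y hy => ih hj y hy)
      rw [hev.deriv_eq]
      have hd := (HasDerivAt.const_mul ((-1 : ℝ) ^ (j + 1) * (Nat.factorial j : ℝ))
        (hasDerivAt_T hj hx)).deriv
      rw [hd, Nat.factorial_succ]
      push_cast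
      ring

lemma cauchy_schwarz_T {x : ℝ} (hx : 0 < x) (r : ℕ) (hr : 1 ≤ r) :
    (T (2 * r + 1) x) ^ 2 ≤ T (2 * r) x * T (2 * r + 2) x := by
  have hnn : ∀ (j : ℕ) (n : ℕ), (0:ℝ) ≤ 1 / (x + n) ^ j := fun j n => by
    have : (0:ℝ) < x + n := by positivity
    positivity
  have hpartial : ∀ N : ℕ,
      (∑ n ∈ Finset.range N, 1 / (x + n) ^ (2 * r + 1)) ^ 2 ≤
        T (2 * r) x * T (2 * r + 2) x := by
    intro N
    have hcs := Finset.sum_mul_sq_le_sq_mul_sq (Finset.range N)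
      (fun n : ℕ => 1 / (x + n) ^ r) (fun n : ℕ => 1 / (x + n) ^ (r + 1))
    have hterm : ∀ n : ℕ, 1 / (x + (n:ℝ)) ^ r * (1 / (x + n) ^ (r + 1)) =
        1 / (x + n) ^ (2 * r + 1) := by
      intro n
      rw [div_mul_div_comm, one_mul, ← pow_add]
      congr 1
      ring
    have hsq1 : ∀ n : ℕ, (1 / (x + (n:ℝ)) ^ r) ^ 2 = 1 / (x + n) ^ (2 * r) := by
      intro n
      rw [div_pow, one_pow, ← pow_mul]
      congr 1
      ring
    have hsq2 : ∀ n : ℕ, (1 / (x + (n:ℝ)) ^ (r + 1)) ^ 2 = 1 / (x + n) ^ (2 * r + 2) := by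
      intro n
      rw [div_pow, one_pow, ← pow_mul]
      congr 1
      ring
    simp only [hterm, hsq1, hsq2] at hcs
    refine hcs.trans ?_
    have h1 : (∑ n ∈ Finset.range N, 1 / (x + (n:ℝ)) ^ (2 * r)) ≤ T (2 * r) x :=
      Summable.sum_le_tsum _ (fun n _ => hnn _ n) (summable_T hx (by omega))
    have h2 : (∑ n ∈ Finset.range N, 1 / (x + (n:ℝ)) ^ (2 * r + 2)) ≤ T (2 * r + 2) x :=
      Summable.sum_le_tsum _ (fun n _ => hnn _ n) (summable_T hx (by omega))
    exact mul_le_mul h1 h2 (Finset.sum_nonneg fun n _ => hnn _ n)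
      ((Finset.sum_nonneg fun n _ => hnn _ n).trans h1)
  have htends : Tendsto (fun N : ℕ =>
      (∑ n ∈ Finset.range N, 1 / (x + n) ^ (2 * r + 1)) ^ 2) atTop
      (𝓝 ((T (2 * r + 1) x) ^ 2)) :=
    ((summable_T hx (by omega)).hasSum.tendsto_sum_nat).pow 2
  exact le_of_tendsto' htends hpartial

end PolygammaAux

open PolygammaAux

theorem polygamma_turan (m : ℕ) (hm : 0 < m) (hodd : Odd m) (t : ℝ) (ht : 0 < t) :
    iteratedDeriv m psi t * iteratedDeriv (m + 2) psi t -
      (iteratedDeriv (m + 1) psi t) ^ 2 ≥ 0 := by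
  obtain ⟨s, hs⟩ := hodd
  have h1 := iteratedDeriv_psi m hm t ht
  have h2 := iteratedDeriv_psi (m + 1) (by omega) t ht
  have h3 := iteratedDeriv_psi (m + 2) (by omega) t ht
  have e1 : (-1 : ℝ) ^ (m + 1) = 1 := Even.neg_one_pow ⟨s + 1, by omega⟩
  have e2 : (-1 : ℝ) ^ (m + 1 + 1) = -1 := Odd.neg_one_pow ⟨s + 1, by omega⟩
  have e3 : (-1 : ℝ) ^ (m + 2 + 1) = 1 := Even.neg_one_pow ⟨s + 2, by omega⟩
  rw [e1, one_mul] at h1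
  rw [e2] at h2
  rw [e3, one_mul] at h3
  -- Cauchy-Schwarz
  have hcs : (T (m + 2) t) ^ 2 ≤ T (m + 1) t * T (m + 3) t := by
    have := cauchy_schwarz_T ht (s + 1) (by omega)
    rw [show 2 * (s + 1) + 2 = m + 3 by omega, show 2 * (s + 1) + 1 = m + 2 by omega,
      show 2 * (s + 1) = m + 1 by omega] at this
    exact this
  have hA : 0 ≤ T (m + 1) t := T_nonneg _ ht
  have hC : 0 ≤ T (m + 3) t := T_nonneg _ ht
  -- factorial inequality
  have hfact : ((Nat.factorial (m + 1) : ℝ)) ^ 2 ≤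
      (Nat.factorial m : ℝ) * (Nat.factorial (m + 2) : ℝ) := by
    have hf : Nat.factorial (m + 1) ^ 2 ≤ Nat.factorial m * Nat.factorial (m + 2) := by
      rw [Nat.factorial_succ (m + 1), Nat.factorial_succ m, pow_two]
      calc (m + 1) * Nat.factorial m * ((m + 1) * Nat.factorial m)
          = (m + 1) * ((m + 1) * Nat.factorial m) * Nat.factorial m := by ring
        _ ≤ (m + 2) * ((m + 1) * Nat.factorial m) * Nat.factorial m := by
            apply Nat.mul_le_mul_right
            apply Nat.mul_le_mul_right
            omega
        _ = Nat.factorial m * ((m + 2) * ((m + 1) * Nat.factorial m)) := by ring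
    exact_mod_cast hf
  have hkey : ((Nat.factorial (m + 1) : ℝ)) ^ 2 * (T (m + 2) t) ^ 2 ≤
      ((Nat.factorial m : ℝ) * (Nat.factorial (m + 2) : ℝ)) * (T (m + 1) t * T (m + 3) t) :=
    mul_le_mul hfact hcs (sq_nonneg _) (by positivity)
  rw [show m + 1 + 1 = m + 2 from by omega] at h2
  rw [show m + 2 + 1 = m + 3 from by omega] at h3
  rw [h1, h2, h3]
  nlinarith [hkey]
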